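/- Let M be a non-negative random variable and let κ ∈ (1,2]. Suppose there exist constants 0 < c ≤ C and s₀ > 0 such that c·s^{−κ} ≤ P(M > s) ≤ C·s^{−κ} for all s ≥ s₀. Let p = κ/2. Then there exist constants 0 < c' ≤ C' and a₀ > 1 such that for all a ≥ a₀: c'·a^{p−κ}·log a ≤ E[ (M²/(a+M))^p ] ≤ C'·a^{p−κ}·log a. -/

import Mathlib

open MeasureTheory Real

lemma lint_rpow_Ioc (b r : ℝ) (hb : 0 < b) (hr : -1 < r) :
    ∫⁻ t in Set.Ioc 0 b, ENNReal.ofReal (t ^ r) = ENNReal.ofReal (b ^ (r+1) / (r+1)) := by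
  have hint : IntegrableOn (fun t : ℝ => t ^ r) (Set.Ioc 0 b) :=
    (intervalIntegral.intervalIntegrable_rpow' hr (a := 0) (b := b)).1
  rw [← ofReal_integral_eq_lintegral_ofReal hint]
  · congr 1
    rw [← intervalIntegral.integral_of_le hb.le, integral_rpow (Or.inl hr)]
    rw [Real.zero_rpow (by linarith)]
    ring
  · filter_upwards [self_mem_ae_restrict (measurableSet_Ioc : MeasurableSet (Set.Ioc (0:ℝ) b))]
      with t ht
    exact Real.rpow_nonneg ht.1.le r

lemma lint_rpow_Ioi (b r : ℝ) (hb : 0 < b) (hr : r < -1) :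
    ∫⁻ t in Set.Ioi b, ENNReal.ofReal (t ^ r) = ENNReal.ofReal (-b ^ (r+1) / (r+1)) := by
  rw [← ofReal_integral_eq_lintegral_ofReal (integrableOn_Ioi_rpow_of_lt hr hb)]
  · rw [integral_Ioi_rpow_of_lt hr hb]
  · filter_upwards [self_mem_ae_restrict (measurableSet_Ioi : MeasurableSet (Set.Ioi b))]
      with t ht
    exact Real.rpow_nonneg (hb.trans ht).le r

lemma lint_inv_Ioo (b d : ℝ) (hb : 0 < b) (hbd : b ≤ d) :
    ∫⁻ t in Set.Ioo b d, ENNReal.ofReal t⁻¹ = ENNReal.ofReal (Real.log d - Real.log b) := by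
  have hd : 0 < d := hb.trans_le hbd
  have hint : IntegrableOn (fun t : ℝ => t⁻¹) (Set.Ioc b d) := by
    apply IntegrableOn.mono_set _ Set.Ioc_subset_Icc_self
    apply ContinuousOn.integrableOn_Icc
    apply ContinuousOn.inv₀ continuousOn_id
    intro x hx
    exact ne_of_gt (lt_of_lt_of_le hb hx.1)
  have : (volume.restrict (Set.Ioo b d)) = volume.restrict (Set.Ioc b d) :=
    Measure.restrict_congr_set MeasureTheory.Ioo_ae_eq_Ioc
  rw [this, ← ofReal_integral_eq_lintegral_ofReal hint]
  · congr 1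
    rw [← intervalIntegral.integral_of_le hbd, integral_inv_of_pos hb hd, Real.log_div hd.ne' hb.ne']
  · filter_upwards [self_mem_ae_restrict (measurableSet_Ioc : MeasurableSet (Set.Ioc b d))]
      with t ht
    exact inv_nonneg.2 (le_of_lt (hb.trans ht.1))

lemma real_add_rpow_le {x y q : ℝ} (hx : 0 ≤ x) (hy : 0 ≤ y) (hq : 0 ≤ q) (hq1 : q ≤ 1) :
    (x + y) ^ q ≤ x ^ q + y ^ q := by
  have h := NNReal.rpow_add_le_add_rpow x.toNNReal y.toNNReal hq hq1
  rw [← Real.coe_toNNReal x hx, ← Real.coe_toNNReal y hy, ← NNReal.coe_add, ← NNReal.coe_rpow,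
    ← NNReal.coe_rpow, ← NNReal.coe_rpow, ← NNReal.coe_add]
  exact_mod_cast h

set_option maxHeartbeats 1000000 in
theorem stmt_8 {Ω : Type*} [MeasurableSpace Ω] (μ : Measure Ω)
    [IsProbabilityMeasure μ]
    (M : Ω → ℝ) (hmeas : Measurable M) (hnn : ∀ ω, 0 ≤ M ω)
    (κ : ℝ) (hκ1 : 1 < κ) (hκ2 : κ ≤ 2)
    (c C s₀ : ℝ) (hc : 0 < c) (hcC : c ≤ C) (hs₀ : 0 < s₀)
    (htail : ∀ s : ℝ, s₀ ≤ s →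
      ENNReal.ofReal (c * s ^ (-κ)) ≤ μ {ω | s < M ω} ∧
      μ {ω | s < M ω} ≤ ENNReal.ofReal (C * s ^ (-κ)))
    (p : ℝ) (hp : p = κ / 2) :
    ∃ c' C' a₀ : ℝ, 0 < c' ∧ c' ≤ C' ∧ 1 < a₀ ∧
      ∀ a : ℝ, a₀ ≤ a →
        ENNReal.ofReal (c' * a ^ (p - κ) * Real.log a) ≤
          ∫⁻ ω, ENNReal.ofReal ((M ω ^ 2 / (a + M ω)) ^ p) ∂μ ∧
        ∫⁻ ω, ENNReal.ofReal ((M ω ^ 2 / (a + M ω)) ^ p) ∂μ ≤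
          ENNReal.ofReal (C' * a ^ (p - κ) * Real.log a) := by
  have hκ0 : (0:ℝ) < κ := by linarith
  have hC0 : (0:ℝ) < C := lt_of_lt_of_le hc hcC
  have hp0 : 0 < p := by rw [hp]; linarith
  have hp1 : p ≤ 1 := by rw [hp]; linarith
  have hpκ : p < κ := by rw [hp]; linarith
  have hpk : p - κ = -p := by rw [hp]; ring
  set L : ℝ := |Real.log s₀| with hLdef
  have hL0 : 0 ≤ L := abs_nonneg _
  have hs₀κ : (0:ℝ) ≤ s₀ ^ κ := Real.rpow_nonneg hs₀.le κ
  refine ⟨κ * c / (2 * 2 ^ p), s₀ ^ κ + κ * C * (1 + L) + 2 * C, s₀ ^ 2 + 3,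
    by positivity, ?_, by nlinarith [sq_nonneg s₀], ?_⟩
  · -- c' ≤ C'
    have h2p : (1:ℝ) ≤ 2 ^ p := by
      have := Real.rpow_le_rpow_of_exponent_le (by norm_num : (1:ℝ) ≤ 2) hp0.le
      rwa [Real.rpow_zero] at this
    have h1 : κ * c / (2 * 2 ^ p) ≤ κ * c := by
      apply div_le_self (by positivity)
      nlinarith
    nlinarith [mul_le_mul_of_nonneg_left hcC hκ0.le,
      mul_nonneg (mul_nonneg hκ0.le hC0.le) hL0, hC0.le]
  intro a ha
  -- basic facts about a
  have ha3 : (3:ℝ) ≤ a := by nlinarith [sq_nonneg s₀]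
  have ha0 : (0:ℝ) < a := by linarith
  have hs₀a : s₀ < a := by nlinarith
  have hs₀2a : s₀ ^ 2 ≤ a := by nlinarith
  have hs₀a' : s₀ ≤ a := hs₀a.le
  have hloga1 : 1 ≤ Real.log a := by
    rw [Real.le_log_iff_exp_le ha0]
    have := Real.exp_one_lt_d9
    linarith
  have hloga0 : (0:ℝ) < Real.log a := by linarith
  have hlogs : Real.log a / 2 ≤ Real.log a - Real.log s₀ := by
    have h2 : 2 * Real.log s₀ ≤ Real.log a := by
      have h := Real.log_le_log (by positivity : (0:ℝ) < s₀ ^ 2) hs₀2a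
      rw [Real.log_pow] at h
      push_cast at h
      linarith
    linarith
  set N : Ω → ℝ := fun ω => min (M ω) a with hNdef
  have hNmeas : Measurable N := hmeas.min measurable_const
  have hNnn : ∀ ω, 0 ≤ N ω := fun ω => le_min (hnn ω) ha0.le
  have hNκmeas : Measurable (fun ω => N ω ^ κ) :=
    (Real.continuous_rpow_const hκ0.le).measurable.comp hNmeas
  set H : Ω → ℝ := fun ω => max (M ω - a) 0 with hHdef
  have hHmeas : Measurable H := (hmeas.sub measurable_const).max measurable_const
  have hHnn : ∀ ω, 0 ≤ H ω := fun ω => le_max_right _ _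
  -- exponent arithmetic
  have haexp : a ^ (-p) = a ^ (p - κ) := by rw [hpk]
  have hapκ : (0:ℝ) ≤ a ^ (p - κ) := Real.rpow_nonneg ha0.le _
  -- layer cake for N^κ
  have layerN := lintegral_rpow_eq_lintegral_meas_lt_mul μ
    (Filter.Eventually.of_forall hNnn) hNmeas.aemeasurable hκ0
  -- splitting of the half line
  have hdisj1 : Disjoint (Set.Ioc (0:ℝ) s₀) (Set.Ioo s₀ a) := by
    rw [Set.disjoint_left]; rintro x ⟨_, h2⟩ ⟨h3, _⟩; linarith
  have hdisj2 : Disjoint (Set.Ioc (0:ℝ) s₀ ∪ Set.Ioo s₀ a) (Set.Ici a) := by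
    rw [Set.disjoint_left]; rintro x (⟨_, h2⟩ | ⟨_, h2⟩) h3 <;>
      · simp only [Set.mem_Ici] at h3; linarith
  have hsplit : ∀ Φ : ℝ → ENNReal, ∫⁻ t in Set.Ioi 0, Φ t =
      (∫⁻ t in Set.Ioc 0 s₀, Φ t) + (∫⁻ t in Set.Ioo s₀ a, Φ t) + ∫⁻ t in Set.Ici a, Φ t := by
    intro Φ
    rw [show Set.Ioi (0:ℝ) = (Set.Ioc 0 s₀ ∪ Set.Ioo s₀ a) ∪ Set.Ici a by
        rw [Set.Ioc_union_Ioo_eq_Ioo hs₀.le hs₀a, Set.Ioo_union_Ici_eq_Ioi ha0],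
      lintegral_union measurableSet_Ici hdisj2,
      lintegral_union measurableSet_Ioo hdisj1]
  -- the three pieces for N
  have hT1 : (∫⁻ t in Set.Ioc 0 s₀, μ {ω | t < N ω} * ENNReal.ofReal (t ^ (κ-1)))
      ≤ ENNReal.ofReal (s₀ ^ κ / κ) := by
    calc (∫⁻ t in Set.Ioc 0 s₀, μ {ω | t < N ω} * ENNReal.ofReal (t ^ (κ-1)))
        ≤ ∫⁻ t in Set.Ioc 0 s₀, 1 * ENNReal.ofReal (t ^ (κ-1)) :=
          setLIntegral_mono' measurableSet_Ioc (fun t _ => mul_le_mul_left prob_le_one _)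
      _ = ENNReal.ofReal (s₀ ^ (κ-1+1) / (κ-1+1)) := by
          simp_rw [one_mul]; exact lint_rpow_Ioc s₀ (κ-1) hs₀ (by linarith)
      _ = ENNReal.ofReal (s₀ ^ κ / κ) := by rw [sub_add_cancel]
  have hT2u : (∫⁻ t in Set.Ioo s₀ a, μ {ω | t < N ω} * ENNReal.ofReal (t ^ (κ-1)))
      ≤ ENNReal.ofReal (C * (Real.log a - Real.log s₀)) := by
    have hpt : ∀ t ∈ Set.Ioo s₀ a, μ {ω | t < N ω} * ENNReal.ofReal (t ^ (κ-1))
        ≤ ENNReal.ofReal C * ENNReal.ofReal t⁻¹ := by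
      intro t ht
      have ht0 : 0 < t := hs₀.trans ht.1
      have hset : {ω | t < N ω} = {ω | t < M ω} := by
        ext ω; simp [hNdef, lt_min_iff, ht.2]
      calc μ {ω | t < N ω} * ENNReal.ofReal (t ^ (κ-1))
          = μ {ω | t < M ω} * ENNReal.ofReal (t ^ (κ-1)) := by rw [hset]
        _ ≤ ENNReal.ofReal (C * t ^ (-κ)) * ENNReal.ofReal (t ^ (κ-1)) :=
            mul_le_mul_left (htail t ht.1.le).2 _
        _ = ENNReal.ofReal C * ENNReal.ofReal t⁻¹ := by
            rw [← ENNReal.ofReal_mul (by positivity), mul_assoc, ← Real.rpow_add ht0,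
              show -κ + (κ - 1) = (-1 : ℝ) by ring, Real.rpow_neg_one,
              ENNReal.ofReal_mul hC0.le]
    calc (∫⁻ t in Set.Ioo s₀ a, μ {ω | t < N ω} * ENNReal.ofReal (t ^ (κ-1)))
        ≤ ∫⁻ t in Set.Ioo s₀ a, ENNReal.ofReal C * ENNReal.ofReal t⁻¹ :=
          setLIntegral_mono' measurableSet_Ioo hpt
      _ = ENNReal.ofReal C * ∫⁻ t in Set.Ioo s₀ a, ENNReal.ofReal t⁻¹ :=
          lintegral_const_mul' _ _ ENNReal.ofReal_ne_top
      _ = ENNReal.ofReal (C * (Real.log a - Real.log s₀)) := by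
          rw [lint_inv_Ioo s₀ a hs₀ hs₀a', ← ENNReal.ofReal_mul hC0.le]
  have hT2l : ENNReal.ofReal (c * (Real.log a - Real.log s₀))
      ≤ ∫⁻ t in Set.Ioo s₀ a, μ {ω | t < N ω} * ENNReal.ofReal (t ^ (κ-1)) := by
    have hpt : ∀ t ∈ Set.Ioo s₀ a, ENNReal.ofReal c * ENNReal.ofReal t⁻¹
        ≤ μ {ω | t < N ω} * ENNReal.ofReal (t ^ (κ-1)) := by
      intro t ht
      have ht0 : 0 < t := hs₀.trans ht.1
      have hset : {ω | t < N ω} = {ω | t < M ω} := by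
        ext ω; simp [hNdef, lt_min_iff, ht.2]
      calc ENNReal.ofReal c * ENNReal.ofReal t⁻¹
          = ENNReal.ofReal (c * t ^ (-κ)) * ENNReal.ofReal (t ^ (κ-1)) := by
            symm
            rw [← ENNReal.ofReal_mul (by positivity), mul_assoc, ← Real.rpow_add ht0,
              show -κ + (κ - 1) = (-1 : ℝ) by ring, Real.rpow_neg_one,
              ENNReal.ofReal_mul hc.le]
        _ ≤ μ {ω | t < M ω} * ENNReal.ofReal (t ^ (κ-1)) :=
            mul_le_mul_left (htail t ht.1.le).1 _
        _ = μ {ω | t < N ω} * ENNReal.ofReal (t ^ (κ-1)) := by rw [hset]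
    calc ENNReal.ofReal (c * (Real.log a - Real.log s₀))
        = ENNReal.ofReal c * ∫⁻ t in Set.Ioo s₀ a, ENNReal.ofReal t⁻¹ := by
          rw [lint_inv_Ioo s₀ a hs₀ hs₀a', ← ENNReal.ofReal_mul hc.le]
      _ = ∫⁻ t in Set.Ioo s₀ a, ENNReal.ofReal c * ENNReal.ofReal t⁻¹ :=
          (lintegral_const_mul' _ _ ENNReal.ofReal_ne_top).symm
      _ ≤ _ := setLIntegral_mono' measurableSet_Ioo hpt
  have hT3 : (∫⁻ t in Set.Ici a, μ {ω | t < N ω} * ENNReal.ofReal (t ^ (κ-1))) = 0 := by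
    have hpt : ∀ t ∈ Set.Ici a, μ {ω | t < N ω} * ENNReal.ofReal (t ^ (κ-1)) = 0 := by
      intro t ht
      have : {ω | t < N ω} = ∅ := by
        rw [Set.eq_empty_iff_forall_notMem]
        intro ω hω
        exact absurd hω (not_lt.2 ((min_le_right (M ω) a).trans ht))
      rw [this, measure_empty, zero_mul]
    rw [setLIntegral_congr_fun measurableSet_Ici (fun t ht => hpt t ht)]
    simp
  -- bounds for ∫ N^κ
  have hNκu : ∫⁻ ω, ENNReal.ofReal (N ω ^ κ) ∂μ
      ≤ ENNReal.ofReal (s₀ ^ κ + κ * C * (1 + L) * Real.log a) := by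
    rw [layerN, hsplit]
    have hCl : (0:ℝ) ≤ C * (Real.log a - Real.log s₀) := by nlinarith
    calc ENNReal.ofReal κ *
          ((∫⁻ t in Set.Ioc 0 s₀, μ {ω | t < N ω} * ENNReal.ofReal (t ^ (κ-1)))
            + (∫⁻ t in Set.Ioo s₀ a, μ {ω | t < N ω} * ENNReal.ofReal (t ^ (κ-1)))
            + ∫⁻ t in Set.Ici a, μ {ω | t < N ω} * ENNReal.ofReal (t ^ (κ-1)))
        ≤ ENNReal.ofReal κ * ((ENNReal.ofReal (s₀ ^ κ / κ)
            + ENNReal.ofReal (C * (Real.log a - Real.log s₀))) + 0) :=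
          mul_le_mul_right (add_le_add (add_le_add hT1 hT2u) hT3.le) _
      _ = ENNReal.ofReal (κ * (s₀ ^ κ / κ + C * (Real.log a - Real.log s₀))) := by
          rw [add_zero, ← ENNReal.ofReal_add (by positivity) hCl,
            ← ENNReal.ofReal_mul hκ0.le]
      _ ≤ ENNReal.ofReal (s₀ ^ κ + κ * C * (1 + L) * Real.log a) := by
          apply ENNReal.ofReal_le_ofReal
          have hnegL : -Real.log s₀ ≤ L := neg_le_abs _
          have e1 : κ * (s₀ ^ κ / κ + C * (Real.log a - Real.log s₀))
              = s₀ ^ κ + κ * C * (Real.log a - Real.log s₀) := by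
            field_simp
          rw [e1]
          have h2 : Real.log a - Real.log s₀ ≤ (1 + L) * Real.log a := by
            nlinarith [mul_le_mul_of_nonneg_left hloga1 hL0]
          nlinarith [mul_le_mul_of_nonneg_left h2 (mul_nonneg hκ0.le hC0.le)]
  have hNκl : ENNReal.ofReal (κ * c / 2 * Real.log a) ≤ ∫⁻ ω, ENNReal.ofReal (N ω ^ κ) ∂μ := by
    rw [layerN]
    calc ENNReal.ofReal (κ * c / 2 * Real.log a)
        = ENNReal.ofReal κ * ENNReal.ofReal (c * (Real.log a / 2)) := by
          rw [← ENNReal.ofReal_mul hκ0.le]; congr 1; ring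
      _ ≤ ENNReal.ofReal κ * ENNReal.ofReal (c * (Real.log a - Real.log s₀)) :=
          mul_le_mul_right (ENNReal.ofReal_le_ofReal (by nlinarith)) _
      _ ≤ ENNReal.ofReal κ *
            ∫⁻ t in Set.Ioo s₀ a, μ {ω | t < N ω} * ENNReal.ofReal (t ^ (κ-1)) :=
          mul_le_mul_right hT2l _
      _ ≤ ENNReal.ofReal κ *
            ∫⁻ t in Set.Ioi 0, μ {ω | t < N ω} * ENNReal.ofReal (t ^ (κ-1)) :=
          mul_le_mul_right (lintegral_mono_set (fun t ht => hs₀.trans ht.1)) _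
  -- bound for the excess term
  have hexc : ∫⁻ ω, ENNReal.ofReal (H ω ^ p) ∂μ ≤ ENNReal.ofReal (2 * C * a ^ (p - κ)) := by
    have layerH := lintegral_rpow_eq_lintegral_meas_lt_mul μ
      (Filter.Eventually.of_forall hHnn) hHmeas.aemeasurable hp0
    have hHset : ∀ t ∈ Set.Ioi (0:ℝ), μ {ω | t < H ω} * ENNReal.ofReal (t ^ (p-1))
        = μ {ω | a + t < M ω} * ENNReal.ofReal (t ^ (p-1)) := by
      intro t ht
      have ht' : ¬ t < 0 := not_lt.2 (le_of_lt ht)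
      have hseteq : {ω | t < H ω} = {ω | a + t < M ω} := by
        ext ω
        simp [hHdef, lt_max_iff, lt_sub_iff_add_lt', ht']
      rw [hseteq]
    have hdisj3 : Disjoint (Set.Ioc (0:ℝ) a) (Set.Ioi a) := by
      rw [Set.disjoint_left]; rintro x ⟨_, h2⟩ h3
      simp only [Set.mem_Ioi] at h3; linarith
    have hsplit2 : ∀ Φ : ℝ → ENNReal, ∫⁻ t in Set.Ioi 0, Φ t =
        (∫⁻ t in Set.Ioc 0 a, Φ t) + ∫⁻ t in Set.Ioi a, Φ t := by
      intro Φ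
      rw [← Set.Ioc_union_Ioi_eq_Ioi ha0.le, lintegral_union measurableSet_Ioi hdisj3]
    have hE1 : (∫⁻ t in Set.Ioc 0 a, μ {ω | a + t < M ω} * ENNReal.ofReal (t ^ (p-1)))
        ≤ ENNReal.ofReal (C * a ^ (-κ) * (a ^ p / p)) := by
      have hpt : ∀ t ∈ Set.Ioc (0:ℝ) a, μ {ω | a + t < M ω} * ENNReal.ofReal (t ^ (p-1))
          ≤ ENNReal.ofReal (C * a ^ (-κ)) * ENNReal.ofReal (t ^ (p-1)) := by
        intro t ht
        refine mul_le_mul_left (((htail (a+t) (by linarith [ht.1])).2).trans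
          (ENNReal.ofReal_le_ofReal ?_)) _
        exact mul_le_mul_of_nonneg_left
          (Real.rpow_le_rpow_of_nonpos ha0 (by linarith [ht.1]) (by linarith)) hC0.le
      calc (∫⁻ t in Set.Ioc 0 a, μ {ω | a + t < M ω} * ENNReal.ofReal (t ^ (p-1)))
          ≤ ∫⁻ t in Set.Ioc 0 a, ENNReal.ofReal (C * a ^ (-κ)) * ENNReal.ofReal (t ^ (p-1)) :=
            setLIntegral_mono' measurableSet_Ioc hpt
        _ = ENNReal.ofReal (C * a ^ (-κ)) * ∫⁻ t in Set.Ioc 0 a, ENNReal.ofReal (t ^ (p-1)) :=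
            lintegral_const_mul' _ _ ENNReal.ofReal_ne_top
        _ = ENNReal.ofReal (C * a ^ (-κ) * (a ^ p / p)) := by
            rw [lint_rpow_Ioc a (p-1) ha0 (by linarith), sub_add_cancel,
              ← ENNReal.ofReal_mul (by positivity)]
    have hE2 : (∫⁻ t in Set.Ioi a, μ {ω | a + t < M ω} * ENNReal.ofReal (t ^ (p-1)))
        ≤ ENNReal.ofReal (C * (a ^ (p - κ) / p)) := by
      have hpt : ∀ t ∈ Set.Ioi a, μ {ω | a + t < M ω} * ENNReal.ofReal (t ^ (p-1))
          ≤ ENNReal.ofReal C * ENNReal.ofReal (t ^ (p - κ - 1)) := by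
        intro t ht
        simp only [Set.mem_Ioi] at ht
        have ht0 : 0 < t := ha0.trans ht
        calc μ {ω | a + t < M ω} * ENNReal.ofReal (t ^ (p-1))
            ≤ ENNReal.ofReal (C * t ^ (-κ)) * ENNReal.ofReal (t ^ (p-1)) := by
              refine mul_le_mul_left (((htail (a+t) (by linarith)).2).trans
                (ENNReal.ofReal_le_ofReal ?_)) _
              exact mul_le_mul_of_nonneg_left
                (Real.rpow_le_rpow_of_nonpos ht0 (by linarith) (by linarith)) hC0.le
          _ = ENNReal.ofReal C * ENNReal.ofReal (t ^ (p - κ - 1)) := by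
              rw [← ENNReal.ofReal_mul (by positivity), mul_assoc, ← Real.rpow_add ht0,
                show -κ + (p - 1) = p - κ - 1 by ring, ENNReal.ofReal_mul hC0.le]
      calc (∫⁻ t in Set.Ioi a, μ {ω | a + t < M ω} * ENNReal.ofReal (t ^ (p-1)))
          ≤ ∫⁻ t in Set.Ioi a, ENNReal.ofReal C * ENNReal.ofReal (t ^ (p - κ - 1)) :=
            setLIntegral_mono' measurableSet_Ioi hpt
        _ = ENNReal.ofReal C * ∫⁻ t in Set.Ioi a, ENNReal.ofReal (t ^ (p - κ - 1)) :=
            lintegral_const_mul' _ _ ENNReal.ofReal_ne_top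
        _ = ENNReal.ofReal (C * (a ^ (p - κ) / p)) := by
            rw [lint_rpow_Ioi a (p - κ - 1) ha0 (by linarith),
              show p - κ - 1 + 1 = p - κ by ring, hpk, neg_div_neg_eq,
              ← ENNReal.ofReal_mul hC0.le, ← hpk]
    rw [layerH, setLIntegral_congr_fun measurableSet_Ioi (fun t ht => hHset t ht),
      hsplit2]
    have hmulexp : a ^ (-κ) * a ^ p = a ^ (p - κ) := by
      rw [← Real.rpow_add ha0, show -κ + p = p - κ by ring]
    calc ENNReal.ofReal p *
          ((∫⁻ t in Set.Ioc 0 a, μ {ω | a + t < M ω} * ENNReal.ofReal (t ^ (p-1)))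
            + ∫⁻ t in Set.Ioi a, μ {ω | a + t < M ω} * ENNReal.ofReal (t ^ (p-1)))
        ≤ ENNReal.ofReal p * (ENNReal.ofReal (C * a ^ (-κ) * (a ^ p / p))
            + ENNReal.ofReal (C * (a ^ (p - κ) / p))) :=
          mul_le_mul_right (add_le_add hE1 hE2) _
      _ = ENNReal.ofReal (p * (C * a ^ (-κ) * (a ^ p / p) + C * (a ^ (p - κ) / p))) := by
          rw [← ENNReal.ofReal_add (by positivity) (by positivity),
            ← ENNReal.ofReal_mul hp0.le]
      _ ≤ ENNReal.ofReal (2 * C * a ^ (p - κ)) := by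
          apply ENNReal.ofReal_le_ofReal
          apply le_of_eq
          have e1 : p * (C * a ^ (-κ) * (a ^ p / p) + C * (a ^ (p - κ) / p))
              = C * (a ^ (-κ) * a ^ p) + C * a ^ (p - κ) := by
            field_simp
          rw [e1, hmulexp]; ring
  -- pointwise bounds
  have hge_g : ∀ ω, (2*a) ^ (-p) * N ω ^ κ ≤ (M ω ^ 2 / (a + M ω)) ^ p := by
    intro ω
    simp only [hNdef]
    set m := M ω with hm
    have hm0 : 0 ≤ m := hnn ω
    have ham : 0 < a + m := by linarith
    have hmin0 : 0 ≤ min m a := le_min hm0 ha0.le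
    have key : (min m a) ^ 2 / (2*a) ≤ m ^ 2 / (a + m) := by
      rcases le_total m a with h | h
      · rw [min_eq_left h, div_le_div_iff₀ (by positivity) ham]
        nlinarith
      · rw [min_eq_right h, div_le_div_iff₀ (by positivity) ham]
        nlinarith [mul_nonneg ha0.le (mul_nonneg (by linarith : (0:ℝ) ≤ 2*m+a)
          (by linarith : (0:ℝ) ≤ m - a))]
    have step := Real.rpow_le_rpow (by positivity) key hp0.le
    have e2 : ((min m a) ^ 2 : ℝ) ^ p = (min m a) ^ κ := by
      rw [← Real.rpow_natCast (min m a) 2, ← Real.rpow_mul hmin0]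
      congr 1
      push_cast
      rw [hp]; ring
    have e1 : ((min m a) ^ 2 / (2*a)) ^ p = (2*a) ^ (-p) * (min m a) ^ κ := by
      rw [Real.div_rpow (sq_nonneg _) (by positivity), e2,
        Real.rpow_neg (by positivity), inv_mul_eq_div]
    rw [← e1]
    exact step
  have hle_g : ∀ ω, (M ω ^ 2 / (a + M ω)) ^ p ≤ a ^ (-p) * N ω ^ κ + H ω ^ p := by
    intro ω
    simp only [hNdef, hHdef]
    set m := M ω with hm
    have hm0 : 0 ≤ m := hnn ω
    have ham : 0 < a + m := by linarith
    have e2 : (m ^ 2 : ℝ) ^ p = m ^ κ := by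
      rw [← Real.rpow_natCast m 2, ← Real.rpow_mul hm0]
      congr 1
      push_cast
      rw [hp]; ring
    rcases le_total m a with h | h
    · have hmax : (m - a) ⊔ 0 = 0 := max_eq_right (by linarith)
      have hmin : m ⊓ a = m := min_eq_left h
      have key : m ^ 2 / (a + m) ≤ m ^ 2 / a := by
        rw [div_le_div_iff₀ ham ha0]
        nlinarith
      have step := Real.rpow_le_rpow (by positivity) key hp0.le
      have e1 : (m ^ 2 / a) ^ p = a ^ (-p) * m ^ κ := by
        rw [Real.div_rpow (sq_nonneg _) ha0.le, e2, Real.rpow_neg ha0.le, inv_mul_eq_div]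
      calc (m ^ 2 / (a + m)) ^ p ≤ (m ^ 2 / a) ^ p := step
        _ = a ^ (-p) * (m ⊓ a) ^ κ + ((m - a) ⊔ 0) ^ p := by
            rw [e1, hmin, hmax, Real.zero_rpow hp0.ne', add_zero]
    · have hmax : (m - a) ⊔ 0 = m - a := max_eq_left (by linarith)
      have hmin : m ⊓ a = a := min_eq_right h
      have key : m ^ 2 / (a + m) ≤ m := by
        rw [div_le_iff₀ ham]
        nlinarith
      have step := Real.rpow_le_rpow (by positivity) key hp0.le
      have hsub : m ^ p ≤ a ^ p + (m - a) ^ p := by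
        have h' := real_add_rpow_le (x := a) (y := m - a) ha0.le (by linarith) hp0.le hp1
        rwa [show a + (m - a) = m by ring] at h'
      have e3 : a ^ (-p) * a ^ κ = a ^ p := by
        rw [← Real.rpow_add ha0, show -p + κ = p by linarith]
      calc (m ^ 2 / (a + m)) ^ p ≤ m ^ p := step
        _ ≤ a ^ p + (m - a) ^ p := hsub
        _ = a ^ (-p) * (m ⊓ a) ^ κ + ((m - a) ⊔ 0) ^ p := by rw [hmin, hmax, e3]
  constructor
  · -- lower bound
    have h2p0 : (0:ℝ) < 2 ^ p := by positivity
    calc ENNReal.ofReal (κ * c / (2 * 2 ^ p) * a ^ (p - κ) * Real.log a)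
        = ENNReal.ofReal ((2*a) ^ (-p)) * ENNReal.ofReal (κ * c / 2 * Real.log a) := by
          rw [← ENNReal.ofReal_mul (by positivity)]
          congr 1
          rw [Real.mul_rpow (by norm_num : (0:ℝ) ≤ 2) ha0.le,
            Real.rpow_neg (by norm_num : (0:ℝ) ≤ 2), haexp]
          field_simp
      _ ≤ ENNReal.ofReal ((2*a) ^ (-p)) * ∫⁻ ω, ENNReal.ofReal (N ω ^ κ) ∂μ :=
          mul_le_mul_right hNκl _
      _ = ∫⁻ ω, ENNReal.ofReal ((2*a) ^ (-p) * N ω ^ κ) ∂μ := by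
          rw [← lintegral_const_mul' _ _ ENNReal.ofReal_ne_top]
          apply lintegral_congr
          intro ω
          rw [← ENNReal.ofReal_mul (by positivity)]
      _ ≤ ∫⁻ ω, ENNReal.ofReal ((M ω ^ 2 / (a + M ω)) ^ p) ∂μ :=
          lintegral_mono fun ω => ENNReal.ofReal_le_ofReal (hge_g ω)
  · -- upper bound
    have hA : (0:ℝ) ≤ s₀ ^ κ + κ * C * (1 + L) * Real.log a := by
      have := mul_nonneg (mul_nonneg (mul_nonneg hκ0.le hC0.le)
        (by linarith : (0:ℝ) ≤ 1 + L)) hloga0.le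
      linarith
    calc ∫⁻ ω, ENNReal.ofReal ((M ω ^ 2 / (a + M ω)) ^ p) ∂μ
        ≤ ∫⁻ ω, (ENNReal.ofReal (a ^ (-p) * N ω ^ κ) + ENNReal.ofReal (H ω ^ p)) ∂μ := by
          apply lintegral_mono
          intro ω
          show ENNReal.ofReal ((M ω ^ 2 / (a + M ω)) ^ p)
            ≤ ENNReal.ofReal (a ^ (-p) * N ω ^ κ) + ENNReal.ofReal (H ω ^ p)
          rw [← ENNReal.ofReal_add (mul_nonneg (Real.rpow_nonneg ha0.le _)
            (Real.rpow_nonneg (hNnn ω) _)) (Real.rpow_nonneg (hHnn ω) p)]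
          exact ENNReal.ofReal_le_ofReal (hle_g ω)
      _ = (∫⁻ ω, ENNReal.ofReal (a ^ (-p) * N ω ^ κ) ∂μ)
            + ∫⁻ ω, ENNReal.ofReal (H ω ^ p) ∂μ :=
          lintegral_add_left ((measurable_const.mul hNκmeas).ennreal_ofReal) _
      _ = ENNReal.ofReal (a ^ (-p)) * (∫⁻ ω, ENNReal.ofReal (N ω ^ κ) ∂μ)
            + ∫⁻ ω, ENNReal.ofReal (H ω ^ p) ∂μ := by
          rw [← lintegral_const_mul' _ _ ENNReal.ofReal_ne_top]
          congr 1
          apply lintegral_congr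
          intro ω
          rw [← ENNReal.ofReal_mul (by positivity)]
      _ ≤ ENNReal.ofReal (a ^ (-p)) * ENNReal.ofReal (s₀ ^ κ + κ * C * (1 + L) * Real.log a)
            + ENNReal.ofReal (2 * C * a ^ (p - κ)) :=
          add_le_add (mul_le_mul_right hNκu _) hexc
      _ ≤ ENNReal.ofReal ((s₀ ^ κ + κ * C * (1 + L) + 2 * C) * a ^ (p - κ) * Real.log a) := by
          rw [← ENNReal.ofReal_mul (Real.rpow_nonneg ha0.le _),
            ← ENNReal.ofReal_add (mul_nonneg (Real.rpow_nonneg ha0.le _) hA) (by positivity)]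
          apply ENNReal.ofReal_le_ofReal
          rw [haexp]
          nlinarith [mul_nonneg (mul_nonneg hapκ hs₀κ) (by linarith : (0:ℝ) ≤ Real.log a - 1),
            mul_nonneg (mul_nonneg hapκ hC0.le) (by linarith : (0:ℝ) ≤ Real.log a - 1)]
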